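/- For every left preferred Gauss code w on n letters, the shift^LP-orbit {w, shift^LP(w), …, (shift^LP)^{n−1}(w)} contains exactly one left canonical Gauss code, namely its lexicographically smallest element. -/

import Mathlib

/-- A Gauss code on `n` letters: a bijection from the `2*n` positions to
letters paired with a side (`false` = L, `true` = R). -/
abbrev GaussCode (n : ℕ) := Fin (2 * n) ≃ Fin n × Bool

instance (n : ℕ) [NeZero n] : NeZero (2 * n) := ⟨by have := NeZero.ne n; omega⟩

namespace GaussCode

variable {n : ℕ}

/-- `π_*(w)`: relabel the letters by the permutation `π`. -/
def permAct (π : Equiv.Perm (Fin n)) (w : GaussCode n) : GaussCode n :=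
  w.trans (π.prodCongr (Equiv.refl Bool))

/-- `shift[m](w)`: the code whose entry at position `i` is the entry of `w` at
position `i + m` (mod `2n`). -/
def shift [NeZero n] (m : ℕ) (w : GaussCode n) : GaussCode n :=
  (Equiv.addRight (Fin.ofNat (2 * n) m)).trans w

/-- `rev(w)`: the code whose entry at position `i` is the entry of `w` at
position `2n - 1 - i`. -/
def rev (w : GaussCode n) : GaussCode n :=
  (Fin.revPerm).trans w

/-- A Gauss code is left preferred if its `L`-entries appear in the order
`(1,L), (2,L), …, (n,L)` and its entry at position `0` is `(1,L)`. -/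
def IsLeftPreferred [NeZero n] (w : GaussCode n) : Prop :=
  StrictMono (fun j : Fin n => w.symm (j, false)) ∧ w 0 = (0, false)

/-- `proj^LP(w)`: relabel letters in the order of appearance of their `L`-entries,
then rotate so that `(1,L)` is at position `0`. -/
def projLP [NeZero n] (w : GaussCode n) : GaussCode n :=
  let π : Equiv.Perm (Fin n) := (Tuple.sort (fun j : Fin n => w.symm (j, false)))⁻¹
  let w' := permAct π w
  shift ((w'.symm ((0 : Fin n), false)).val) w'

/-- `shift^LP(w) := proj^LP(shift[1](w))`. -/
def shiftLP [NeZero n] (w : GaussCode n) : GaussCode n :=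
  projLP (shift 1 w)

/-- `rev^LP(w) := proj^LP(rev(w))`. -/
def revLP [NeZero n] (w : GaussCode n) : GaussCode n :=
  projLP (rev w)

/-- The value of an entry in the order `(1,L) < (1,R) < (2,L) < (2,R) < …`. -/
def entryKey (e : Fin n × Bool) : ℕ :=
  2 * e.1.val + (if e.2 then 1 else 0)

/-- Lexicographic (strict) order on Gauss codes, comparing entries position by
position in the order `(1,L) < (1,R) < (2,L) < (2,R) < …`. -/
def lexLt (w w' : GaussCode n) : Prop :=
  ∃ i : Fin (2 * n), (∀ k, k < i → w k = w' k) ∧ entryKey (w i) < entryKey (w' i)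

/-- Lexicographic order on Gauss codes. -/
def lexLe (w w' : GaussCode n) : Prop :=
  w = w' ∨ lexLt w w'

/-- A left preferred Gauss code is left canonical if it is the smallest element
of its `shift^LP`-orbit `{w, shift^LP(w), …, (shift^LP)^{n-1}(w)}`. -/
def IsLeftCanonical [NeZero n] (w : GaussCode n) : Prop :=
  IsLeftPreferred w ∧ ∀ k < n, lexLe w (shiftLP^[k] w)

/-- `proj^LC(w)`: the smallest element of the `shift^LP`-orbit of `proj^LP(w)`. -/
noncomputable def projLC [NeZero n] (w : GaussCode n) : GaussCode n :=
  letI := Classical.propDecidable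
  if h : ∃ v : GaussCode n, (∃ k < n, v = shiftLP^[k] (projLP w)) ∧
      ∀ k < n, lexLe v (shiftLP^[k] (projLP w))
  then h.choose else projLP w

/-- `rev^LC(w) := proj^LC(rev(w))`. -/
noncomputable def revLC [NeZero n] (w : GaussCode n) : GaussCode n :=
  projLC (rev w)

/-- Oriented equivalence of Gauss codes: `w' = shift[m](π_*(w))` for some
permutation `π` and integer `m`. -/
def OrientedEquiv [NeZero n] (w w' : GaussCode n) : Prop :=
  ∃ (π : Equiv.Perm (Fin n)) (m : ℕ), w' = shift m (permAct π w)

/-- Unoriented equivalence: `w` is orientedly equivalent to `w'` or to `rev(w')`. -/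
def UnorientedEquiv [NeZero n] (w w' : GaussCode n) : Prop :=
  OrientedEquiv w w' ∨ OrientedEquiv w (rev w')

/-- A Gauss code is 1-reducible if two cyclically adjacent entries share the same letter. -/
def OneReducible [NeZero n] (w : GaussCode n) : Prop :=
  ∃ i : Fin (2 * n), (w i).1 = (w (i + 1)).1

/-- A Gauss code is 2-reducible (cyclically, with `L = false`, `R = true`). -/
def TwoReducible [NeZero n] (w : GaussCode n) : Prop :=
  ∃ (i i' : Fin (2 * n)) (j k : Fin n), j ≠ k ∧
    ((w i = (j, false) ∧ w (i + 1) = (k, true) ∧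
        w i' = (j, true) ∧ w (i' + 1) = (k, false)) ∨
     (w i = (j, false) ∧ w (i + 1) = (k, true) ∧
        w i' = (k, false) ∧ w (i' + 1) = (j, true)) ∨
     (w i = (j, true) ∧ w (i + 1) = (k, false) ∧
        w i' = (k, true) ∧ w (i' + 1) = (j, false)))

/-- A Gauss code is minimal if it is neither 1-reducible nor 2-reducible. -/
def IsMinimal [NeZero n] (w : GaussCode n) : Prop :=
  ¬ OneReducible w ∧ ¬ TwoReducible w

/-- `σ_w`: the involution of positions sending each position to the unique other
position carrying the same letter. -/
def sigmaMap (w : GaussCode n) : Fin (2 * n) → Fin (2 * n) :=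
  fun i => w.symm ((w i).1, !(w i).2)

/-- `h_w`: the side (`false` = L, `true` = R) of the entry at each position. -/
def hMap (w : GaussCode n) : Fin (2 * n) → Bool :=
  fun i => (w i).2

end GaussCode

open Fin.NatCast Fin.CommRing

namespace GaussCode
variable {n : ℕ}

lemma permAct_apply (π : Equiv.Perm (Fin n)) (w : GaussCode n) (i : Fin (2*n)) :
    permAct π w i = (π (w i).1, (w i).2) := rfl

lemma permAct_symm_apply (π : Equiv.Perm (Fin n)) (w : GaussCode n) (j : Fin n) (b : Bool) :
    (permAct π w).symm (j, b) = w.symm (π.symm j, b) := rfl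

section
variable [NeZero n]
set_option linter.unusedSectionVars false

lemma shift_apply (m : ℕ) (w : GaussCode n) (i : Fin (2*n)) :
    shift m w i = w (i + (m : Fin (2*n))) := rfl

lemma shift_symm_apply (m : ℕ) (w : GaussCode n) (e : Fin n × Bool) :
    (shift m w).symm e = w.symm e - (m : Fin (2*n)) := by
  simp [shift, sub_eq_add_neg]

lemma shift_cast_congr {m₁ m₂ : ℕ} (h : (m₁ : Fin (2*n)) = (m₂ : Fin (2*n))) (w : GaussCode n) :
    shift m₁ w = shift m₂ w := by
  show (Equiv.addRight (m₁ : Fin (2*n))).trans w = (Equiv.addRight (m₂ : Fin (2*n))).trans w; rw [h]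

lemma shift_shift (a b : ℕ) (w : GaussCode n) :
    shift a (shift b w) = shift (b + a) w := by
  apply Equiv.ext; intro i
  simp only [shift_apply, Nat.cast_add]
  ring_nf

lemma shift_zero (w : GaussCode n) : shift 0 w = w := by
  apply Equiv.ext; intro i
  simp [shift_apply]

lemma shift_permAct (m : ℕ) (π : Equiv.Perm (Fin n)) (w : GaussCode n) :
    shift m (permAct π w) = permAct π (shift m w) := rfl

lemma permAct_permAct (ρ π : Equiv.Perm (Fin n)) (w : GaussCode n) :
    permAct ρ (permAct π w) = permAct (π.trans ρ) w := by
  apply Equiv.ext; intro i; rfl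

lemma permAct_refl (w : GaussCode n) : permAct (Equiv.refl (Fin n)) w = w := by
  apply Equiv.ext; intro i; rfl

end
end GaussCode
namespace GaussCode
variable {n : ℕ} [NeZero n]
set_option linter.unusedSectionVars false

/-- The sorting permutation used in `projLP`. -/
noncomputable def sortPerm (w : GaussCode n) : Equiv.Perm (Fin n) :=
  (Tuple.sort (fun j : Fin n => w.symm (j, false)))⁻¹

/-- The shift amount used in `projLP`: the least L-position. -/
noncomputable def mfin (w : GaussCode n) : Fin (2*n) :=
  (permAct (sortPerm w) w).symm (0, false)

lemma projLP_def (w : GaussCode n) :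
    projLP w = shift (mfin w).val (permAct (sortPerm w) w) := rfl

lemma mfin_eq (w : GaussCode n) :
    mfin w = w.symm (Tuple.sort (fun j : Fin n => w.symm (j, false)) 0, false) := rfl

lemma mfin_isL (w : GaussCode n) : (w (mfin w)).2 = false := by
  rw [mfin_eq, Equiv.apply_symm_apply]

lemma mfin_le (w : GaussCode n) {i : Fin (2*n)} (hi : (w i).2 = false) : mfin w ≤ i := by
  set f : Fin n → Fin (2*n) := fun j => w.symm (j, false) with hf
  have hi' : i = f ((w i).1) := by
    rw [hf]; simp only []
    rw [Equiv.eq_symm_apply]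
    exact Prod.ext rfl hi
  have hmono := Tuple.monotone_sort f
  have : mfin w = (f ∘ Tuple.sort f) 0 := rfl
  rw [this, hi']
  have : f ((w i).1) = (f ∘ Tuple.sort f) ((Tuple.sort f)⁻¹ ((w i).1)) := by
    simp [Function.comp]
  rw [this]
  exact hmono (Fin.zero_le _)
lemma projLP_isLP (w : GaussCode n) : IsLeftPreferred (projLP w) := by
  set f : Fin n → Fin (2*n) := fun j => w.symm (j, false) with hf
  set w' : GaussCode n := permAct (sortPerm w) w with hw'
  have hg : (fun j : Fin n => w'.symm (j, false)) = f ∘ Tuple.sort f := by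
    funext j
    rw [hw', permAct_symm_apply]
    rfl
  have hginj : Function.Injective (fun j : Fin n => w'.symm (j, false)) := by
    intro a b hab
    have := w'.symm.injective hab
    exact (Prod.mk.injEq _ _ _ _).mp this |>.1
  have hgmono : Monotone (fun j : Fin n => w'.symm (j, false)) := by
    rw [hg]; exact Tuple.monotone_sort f
  have hgsm : StrictMono (fun j : Fin n => w'.symm (j, false)) :=
    hgmono.strictMono_of_injective hginj
  have hm0 : mfin w = w'.symm (0, false) := rfl
  constructor
  · -- strict mono of shifted
    intro a b hab
    rw [projLP_def]
    simp only [shift_symm_apply, Fin.cast_val_eq_self]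
    rw [← hw', ← hm0] at *
    have ha : mfin w ≤ w'.symm (a, false) := by rw [hm0]; exact hgmono (Fin.zero_le a)
    have hb : mfin w ≤ w'.symm (b, false) := by rw [hm0]; exact hgmono (Fin.zero_le b)
    have hab' : w'.symm (a, false) < w'.symm (b, false) := hgsm hab
    rw [Fin.lt_def, Fin.sub_val_of_le ha, Fin.sub_val_of_le hb]
    have := Fin.lt_def.mp hab'
    omega
  · rw [projLP_def]
    show w' (0 + ((mfin w).val : Fin (2*n))) = (0, false)
    rw [Fin.cast_val_eq_self, zero_add, hm0, Equiv.apply_symm_apply]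

lemma permAct_eq_self_of_LP {w : GaussCode n} {σ : Equiv.Perm (Fin n)}
    (hw : IsLeftPreferred w) (h : IsLeftPreferred (permAct σ w)) :
    permAct σ w = w := by
  set g : Fin n → Fin (2*n) := fun j => w.symm (j, false) with hgdef
  have hg : StrictMono g := hw.1
  have hg' : StrictMono (g ∘ σ.symm) := by
    have : (fun j : Fin n => (permAct σ w).symm (j, false)) = g ∘ σ.symm := by
      funext j; rw [permAct_symm_apply]; rfl
    rw [← this]; exact h.1
  have hrange : Set.range (g ∘ σ.symm) = Set.range g :=
    Set.range_comp g σ.symm ▸ by rw [σ.symm.range_eq_univ, Set.image_univ]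
  haveI : WellFoundedLT (Fin n) := inferInstance
  have heq : g ∘ σ.symm = g := (StrictMono.range_inj hg' hg).mp hrange
  have hid : ∀ j, σ.symm j = j := fun j => hg.injective (congrFun heq j)
  apply Equiv.ext; intro i
  rw [permAct_apply]
  have : σ (w i).1 = (w i).1 := by
    conv_lhs => rw [← hid (w i).1]
    exact σ.apply_symm_apply _
  rw [this]

lemma proj_uniq {w : GaussCode n} {m₁ m₂ : ℕ} {π₁ π₂ : Equiv.Perm (Fin n)}
    (hc : (m₁ : Fin (2*n)) = (m₂ : Fin (2*n)))
    (h1 : IsLeftPreferred (shift m₁ (permAct π₁ w)))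
    (h2 : IsLeftPreferred (shift m₂ (permAct π₂ w))) :
    shift m₁ (permAct π₁ w) = shift m₂ (permAct π₂ w) := by
  have hs : shift m₂ (permAct π₂ w) = permAct (π₁.symm.trans π₂) (shift m₁ (permAct π₁ w)) := by
    rw [← shift_permAct, permAct_permAct, ← shift_cast_congr hc]
    congr 1
    apply Equiv.ext; intro i
    simp [permAct_apply]
  rw [hs]
  exact (permAct_eq_self_of_LP h1 (hs ▸ h2)).symm

lemma projLP_char {w : GaussCode n} {m : ℕ} {π : Equiv.Perm (Fin n)}
    (hm : (m : Fin (2*n)) = mfin w)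
    (hLP : IsLeftPreferred (shift m (permAct π w))) :
    shift m (permAct π w) = projLP w := by
  rw [projLP_def]
  exact proj_uniq (by rw [hm, Fin.cast_val_eq_self]) hLP (projLP_def w ▸ projLP_isLP w)
lemma mfin_eq_zero_of {w : GaussCode n} (h : (w 0).2 = false) : mfin w = 0 :=
  le_antisymm (mfin_le w h) (Fin.zero_le _)

lemma projLP_of_LP {w : GaussCode n} (hw : IsLeftPreferred w) : projLP w = w := by
  have h0 : (w 0).2 = false := by rw [hw.2]
  have hm : ((0 : ℕ) : Fin (2*n)) = mfin w := by
    rw [mfin_eq_zero_of h0, Nat.cast_zero]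
  have hform : shift 0 (permAct (Equiv.refl (Fin n)) w) = w := by
    rw [permAct_refl, shift_zero]
  have := projLP_char (π := Equiv.refl (Fin n)) hm (by rw [hform]; exact hw)
  rw [hform] at this
  exact this.symm

lemma mfin_permAct (π : Equiv.Perm (Fin n)) (w : GaussCode n) :
    mfin (permAct π w) = mfin w := by
  have h1 : ∀ i : Fin (2*n), ((permAct π w) i).2 = (w i).2 := fun i => rfl
  apply le_antisymm
  · exact mfin_le _ (by rw [h1]; exact mfin_isL w)
  · exact mfin_le _ (by rw [← h1]; exact mfin_isL _)

lemma projLP_permAct (π : Equiv.Perm (Fin n)) (w : GaussCode n) :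
    projLP (permAct π w) = projLP w := by
  have h1 : projLP (permAct π w)
      = shift (mfin (permAct π w)).val (permAct (π.trans (sortPerm (permAct π w))) w) := by
    rw [projLP_def, permAct_permAct]
  rw [h1]
  apply projLP_char
  · rw [Fin.cast_val_eq_self, mfin_permAct]
  · rw [← h1]; exact projLP_isLP _

lemma step_one {w : GaussCode n} {a : ℕ} (hR : (w ((a : Fin (2*n)))).2 = true) :
    projLP (shift a w) = projLP (shift (a+1) w) := by
  set y : GaussCode n := shift a w with hy
  set y' : GaussCode n := shift (a+1) w with hy'
  have hyy' : ∀ i : Fin (2*n), y' i = y (i + 1) := by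
    intro i
    rw [hy, hy', shift_apply, shift_apply, Nat.cast_add, Nat.cast_one, add_assoc,
      add_comm ((a : Fin (2*n))) 1, ← add_assoc]
  have hy0 : (y 0).2 = true := by rw [hy, shift_apply, zero_add]; exact hR
  set M : Fin (2*n) := mfin y with hM
  set M' : Fin (2*n) := mfin y' with hM'
  have hMne : M ≠ 0 := by
    intro h
    have h2 := mfin_isL y
    rw [← hM, h, hy0] at h2
    exact Bool.noConfusion h2
  have h2n : 1 < 2*n := by have := NeZero.ne n; omega
  have hval1 : ((1 : Fin (2*n))).val = 1 := Fin.val_one' (2*n) |>.trans (Nat.mod_eq_of_lt h2n)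
  have hMpos : 0 < M.val := by
    rcases Nat.eq_zero_or_pos M.val with h | h
    · exact absurd (Fin.ext (h.trans (Fin.val_zero _).symm) : M = 0) hMne
    · exact h
  have hM1 : (1 : Fin (2*n)) ≤ M := by
    rw [Fin.le_def, hval1]; omega
  have hle1 : M' ≤ M - 1 := by
    apply mfin_le
    rw [hyy', sub_add_cancel]
    exact mfin_isL y
  have hle2 : M ≤ M' + 1 := by
    apply mfin_le
    rw [← hyy']
    exact mfin_isL y'
  have hMM' : M = M' + 1 := by
    have hsub : (M - 1).val = M.val - 1 := by
      rw [Fin.sub_val_of_le hM1, hval1]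
    have h1 : M'.val ≤ M.val - 1 := by
      have := Fin.le_def.mp hle1; omega
    have hadd : (M' + 1).val = (M'.val + 1) % (2*n) := by
      simp [Fin.add_def, hval1]
    have hmod : (M'.val + 1) % (2*n) = M'.val + 1 := Nat.mod_eq_of_lt (by omega)
    apply Fin.ext
    have h3 := Fin.le_def.mp hle2
    omega
  -- now rewrite both projLPs into canonical form over w
  have e1 : projLP y = shift (a + M.val) (permAct (sortPerm y) w) := by
    rw [projLP_def]
    show shift (M.val) (permAct (sortPerm y) (shift a w)) = _
    rw [← shift_permAct, shift_shift]
  have e2 : projLP y' = shift (a + 1 + M'.val) (permAct (sortPerm y') w) := by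
    rw [projLP_def]
    show shift (M'.val) (permAct (sortPerm y') (shift (a+1) w)) = _
    rw [← shift_permAct, shift_shift]
  rw [e1, e2]
  apply proj_uniq
  · push_cast
    rw [hMM']
    ring
  · rw [← e1]; exact projLP_isLP y
  · rw [← e2]; exact projLP_isLP y'

lemma step_many {w : GaussCode n} {a b : ℕ} (hab : a ≤ b) (hb : b ≤ 2*n)
    (hR : ∀ i : ℕ, a ≤ i → i < b → (w ((i : Fin (2*n)))).2 = true) :
    projLP (shift a w) = projLP (shift b w) := by
  induction b, hab using Nat.le_induction with
  | base => rfl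
  | succ b hab ih =>
      have h1 := ih (by omega) (fun i h1 h2 => hR i h1 (by omega))
      rw [h1]
      exact step_one (hR b hab (by omega))
lemma symm_zero_of_LP {w : GaussCode n} (hw : IsLeftPreferred w) :
    w.symm ((0 : Fin n), false) = 0 := by
  rw [Equiv.symm_apply_eq, hw.2]

lemma key_step {w : GaussCode n} (hw : IsLeftPreferred w) (k : Fin n) :
    shiftLP (projLP (shift (w.symm (k, false)).val w)) =
      projLP (shift (w.symm (k+1, false)).val w) := by
  set f : Fin n → Fin (2*n) := fun j => w.symm (j, false) with hf
  have hfsm : StrictMono f := hw.1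
  have hf0 : f 0 = 0 := symm_zero_of_LP hw
  -- the code shifted to an L-position has mfin = 0
  have hm0 : mfin (shift (f k).val w) = 0 := by
    apply mfin_eq_zero_of
    rw [shift_apply, zero_add, Fin.cast_val_eq_self]
    show (w (w.symm (k, false))).2 = false
    rw [Equiv.apply_symm_apply]
  have hu : projLP (shift (f k).val w)
      = permAct (sortPerm (shift (f k).val w)) (shift (f k).val w) := by
    rw [projLP_def, hm0]
    show shift 0 _ = _
    rw [shift_zero]
  show shiftLP (projLP (shift (f k).val w)) = projLP (shift (f (k+1)).val w)
  rw [shiftLP, hu, shift_permAct, projLP_permAct, shift_shift]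
  -- now goal : projLP (shift ((f k).val + 1) w) = projLP (shift (f (k+1)).val w)
  have hnoL : ∀ i : ℕ, (f k).val + 1 ≤ i → i < 2*n →
      (∀ j : Fin n, (f j).val ≠ i) → (w ((i : Fin (2*n)))).2 = true := by
    intro i h1 h2 h3
    by_contra hfalse
    have hfL : (w ((i : Fin (2*n)))).2 = false := by
      cases hb : (w ((i : Fin (2*n)))).2
      · rfl
      · exact absurd hb hfalse
    have : ((i : Fin (2*n))) = f ((w ((i : Fin (2*n)))).1) := by
      rw [hf]
      simp only []
      rw [Equiv.eq_symm_apply]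
      exact Prod.ext rfl hfL
    apply h3 ((w ((i : Fin (2*n)))).1)
    rw [← this, Fin.val_natCast, Nat.mod_eq_of_lt h2]
  by_cases hk : k.val + 1 < n
  · -- non-wrap case
    have hk1val : ((k+1 : Fin n)).val = k.val + 1 := by
      simp [Fin.add_def, Nat.mod_eq_of_lt hk]
    have hklt : k < k + 1 := by rw [Fin.lt_def, hk1val]; omega
    have hab : (f k).val + 1 ≤ (f (k+1)).val := hfsm hklt
    apply step_many hab (f (k+1)).isLt.le
    intro i h1 h2
    apply hnoL i h1 (by have := (f (k+1)).isLt; omega)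
    intro j hj
    rcases lt_trichotomy j k with h | h | h
    · have := hfsm h
      rw [Fin.lt_def] at this; omega
    · subst h; omega
    · have hle : k + 1 ≤ j := by
        rw [Fin.le_def, hk1val]
        exact Fin.lt_def.mp h
      have := hfsm.monotone hle
      rw [Fin.le_def] at this; omega
  · -- wrap case : k is the last letter
    have hklast : k.val + 1 = n := by have := k.isLt; omega
    have hk10 : (k + 1 : Fin n) = 0 := by
      apply Fin.ext
      simp [Fin.add_def, Fin.val_zero, hklast]
    have hstep := step_many (w := w) (a := (f k).val + 1) (b := 2*n)
      (by have := (f k).isLt; omega) le_rfl ?_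
    · have hcast : shift (2*n) w = shift ((f 0).val) w := by
        apply shift_cast_congr
        rw [hf0]
        rw [Fin.natCast_self]
        rw [Fin.val_zero, Nat.cast_zero]
      rw [hstep, hcast, hk10]
    · intro i h1 h2
      apply hnoL i h1 h2
      intro j hj
      have hjk : j ≤ k := by
        rw [Fin.le_def]; have := j.isLt; omega
      have := hfsm.monotone hjk
      rw [Fin.le_def] at this; omega

lemma iter_eq {w : GaussCode n} (hw : IsLeftPreferred w) :
    ∀ k : ℕ, (hk : k < n) →
      shiftLP^[k] w = projLP (shift (w.symm ((⟨k, hk⟩ : Fin n), false)).val w) := by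
  intro k
  induction k with
  | zero =>
      intro hk
      have h0 : (⟨0, hk⟩ : Fin n) = 0 := by apply Fin.ext; simp [Fin.val_zero]
      rw [Function.iterate_zero_apply, h0, symm_zero_of_LP hw]
      rw [Fin.val_zero]
      rw [shift_zero, projLP_of_LP hw]
  | succ k ih =>
      intro hk
      have hk' : k < n := by omega
      have h2 : 1 < n := by omega
      have heq : (⟨k, hk'⟩ : Fin n) + 1 = ⟨k+1, hk⟩ := by
        apply Fin.ext
        rw [Fin.add_def]
        simp only [Fin.val_one']
        show (k + 1 % n) % n = k + 1
        rw [Nat.mod_eq_of_lt h2, Nat.mod_eq_of_lt hk]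
      rw [Function.iterate_succ_apply', ih hk', key_step hw, heq]
lemma period {w : GaussCode n} (hw : IsLeftPreferred w) : shiftLP^[n] w = w := by
  have hn : 0 < n := Nat.pos_of_ne_zero (NeZero.ne n)
  have hlast : n - 1 < n := by omega
  have h1 : shiftLP^[n] w = shiftLP (shiftLP^[n-1] w) := by
    have h2 : shiftLP^[n] w = shiftLP^[(n-1)+1] w := by
      have h3 : n = (n-1)+1 := by omega
      rw [← h3]
    rw [h2, Function.iterate_succ_apply']
  rw [h1, iter_eq hw (n-1) hlast, key_step hw]
  have hk10 : (⟨n-1, hlast⟩ : Fin n) + 1 = 0 := by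
    apply Fin.ext
    rw [Fin.add_def]
    simp only [Fin.val_one', Fin.val_zero]
    show (n - 1 + 1 % n) % n = 0
    rcases Nat.eq_or_lt_of_le hn with h | h
    · rw [← h]
    · rw [Nat.mod_eq_of_lt h]
      have h4 : n - 1 + 1 = n := by omega
      rw [h4, Nat.mod_self]
  rw [hk10, symm_zero_of_LP hw]
  rw [Fin.val_zero, shift_zero, projLP_of_LP hw]

lemma iter_LP {w : GaussCode n} (hw : IsLeftPreferred w) (k : ℕ) :
    IsLeftPreferred (shiftLP^[k] w) := by
  induction k with
  | zero => exact hw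
  | succ k ih =>
      rw [Function.iterate_succ_apply']
      exact projLP_isLP _

lemma iter_mul_period {w : GaussCode n} (hw : IsLeftPreferred w) (q : ℕ) :
    shiftLP^[n * q] w = w := by
  induction q with
  | zero => rfl
  | succ q ih =>
      rw [Nat.mul_succ, Function.iterate_add_apply, period hw, ih]

lemma iter_mod {w : GaussCode n} (hw : IsLeftPreferred w) (a : ℕ) :
    shiftLP^[a] w = shiftLP^[a % n] w := by
  conv_lhs => rw [show a = a % n + n * (a / n) from (Nat.mod_add_div a n).symm]
  rw [Function.iterate_add_apply, iter_mul_period hw]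
lemma entryKey_injective : Function.Injective (entryKey (n := n)) := by
  rintro ⟨a, b⟩ ⟨c, d⟩ h
  unfold entryKey at h
  cases b <;> cases d <;> simp at h
  · exact Prod.ext (show a = c by omega) rfl
  · exact absurd h (by omega)
  · exact absurd h (by omega)
  · exact Prod.ext (show a = c by omega) rfl

section
variable [NeZero n]

lemma lexLe_refl (w : GaussCode n) : lexLe w w := Or.inl rfl

lemma lexLt_asymm {u v : GaussCode n} (h1 : lexLt u v) (h2 : lexLt v u) : False := by
  obtain ⟨i, hi, hik⟩ := h1
  obtain ⟨j, hj, hjk⟩ := h2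
  rcases lt_trichotomy i j with h | h | h
  · rw [hj i h] at hik; omega
  · subst h; omega
  · rw [hi j h] at hjk; omega

lemma lexLt_trans {u v x : GaussCode n} (h1 : lexLt u v) (h2 : lexLt v x) : lexLt u x := by
  obtain ⟨i, hi, hik⟩ := h1
  obtain ⟨j, hj, hjk⟩ := h2
  rcases lt_trichotomy i j with h | h | h
  · exact ⟨i, fun k hk => (hi k hk).trans (hj k (hk.trans h)), by rw [← hj i h]; exact hik⟩
  · subst h; exact ⟨i, fun k hk => (hi k hk).trans (hj k hk), by omega⟩
  · exact ⟨j, fun k hk => (hi k (hk.trans h)).trans (hj k hk), by rw [hi j h]; exact hjk⟩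

lemma lexLt_total {u v : GaussCode n} (hne : u ≠ v) : lexLt u v ∨ lexLt v u := by
  classical
  have hex : ∃ i : Fin (2*n), u i ≠ v i := by
    by_contra hc
    push_neg at hc
    exact hne (Equiv.ext hc)
  set S : Finset (Fin (2*n)) := Finset.univ.filter (fun i => u i ≠ v i) with hS
  have hSne : S.Nonempty := by
    obtain ⟨i, hi⟩ := hex
    exact ⟨i, by simp [hS, hi]⟩
  set i := S.min' hSne with hi
  have himem : u i ≠ v i := by
    have := S.min'_mem hSne
    rw [← hi] at this
    simpa [hS] using this
  have hagree : ∀ k, k < i → u k = v k := by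
    intro k hk
    by_contra hc
    have : i ≤ k := S.min'_le k (by simp [hS, hc])
    omega
  have hkey : entryKey (u i) ≠ entryKey (v i) := fun h => himem (entryKey_injective h)
  rcases lt_or_gt_of_ne hkey with h | h
  · exact Or.inl ⟨i, hagree, h⟩
  · exact Or.inr ⟨i, fun k hk => (hagree k hk).symm, h⟩

lemma lexLe_trans {u v x : GaussCode n} (h1 : lexLe u v) (h2 : lexLe v x) : lexLe u x := by
  rcases h1 with rfl | h1
  · exact h2
  rcases h2 with rfl | h2
  · exact Or.inr h1
  · exact Or.inr (lexLt_trans h1 h2)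

lemma lexLe_antisymm {u v : GaussCode n} (h1 : lexLe u v) (h2 : lexLe v u) : u = v := by
  rcases h1 with rfl | h1
  · rfl
  rcases h2 with rfl | h2
  · rfl
  · exact absurd h2 (fun h => lexLt_asymm h1 h)

lemma exists_min (g : ℕ → GaussCode n) :
    ∀ m : ℕ, 0 < m → ∃ k < m, ∀ j < m, lexLe (g k) (g j) := by
  intro m
  induction m with
  | zero => omega
  | succ m ih =>
      intro _
      rcases Nat.eq_zero_or_pos m with rfl | hm
      · exact ⟨0, by omega, fun j hj => by
          have : j = 0 := by omega
          subst this; exact lexLe_refl _⟩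
      obtain ⟨k, hk, hmin⟩ := ih hm
      by_cases hle : lexLe (g k) (g m)
      · refine ⟨k, by omega, fun j hj => ?_⟩
        rcases Nat.lt_succ_iff_lt_or_eq.mp hj with h | rfl
        · exact hmin j h
        · exact hle
      · have hne : g m ≠ g k := by
          intro h; exact hle (Or.inl h.symm)
        have hlt : lexLt (g m) (g k) := by
          rcases lexLt_total hne with h | h
          · exact h
          · exact absurd (Or.inr h) hle
        refine ⟨m, by omega, fun j hj => ?_⟩
        rcases Nat.lt_succ_iff_lt_or_eq.mp hj with h | rfl
        · exact lexLe_trans (Or.inr hlt) (hmin j h)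
        · exact lexLe_refl _

end

end GaussCode

open GaussCode in
/-- the `shift^LP`-orbit of a left preferred Gauss code contains
exactly one left canonical Gauss code, namely its lexicographically smallest
element. -/
theorem stmt11 (n : ℕ) [NeZero n] (w : GaussCode n) (hw : IsLeftPreferred w) :
    (∃! v : GaussCode n, (∃ k < n, v = shiftLP^[k] w) ∧ IsLeftCanonical v) ∧
    (∀ v : GaussCode n, ((∃ k < n, v = shiftLP^[k] w) ∧ IsLeftCanonical v) →
      ∀ k < n, lexLe v (shiftLP^[k] w)) := by
  have hn : 0 < n := Nat.pos_of_ne_zero (NeZero.ne n)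
  obtain ⟨k₀, hk₀, hmin⟩ := exists_min (fun k => shiftLP^[k] w) n hn
  set v : GaussCode n := shiftLP^[k₀] w with hv
  have hvLP : IsLeftPreferred v := iter_LP hw k₀
  have hmem : ∃ k < n, v = shiftLP^[k] w := ⟨k₀, hk₀, rfl⟩
  have horb : ∀ j : ℕ, shiftLP^[j] v = shiftLP^[(j + k₀) % n] w := by
    intro j
    rw [hv, ← Function.iterate_add_apply, iter_mod hw]
  have hvcan : IsLeftCanonical v := by
    refine ⟨hvLP, fun k hk => ?_⟩
    rw [horb k]
    exact hmin _ (Nat.mod_lt _ hn)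
  have hallle : ∀ v' : GaussCode n, ((∃ k < n, v' = shiftLP^[k] w) ∧ IsLeftCanonical v') →
      ∀ k < n, lexLe v' (shiftLP^[k] w) := by
    rintro v' ⟨⟨k', hk', rfl⟩, hcan⟩ k hk
    have hback : shiftLP^[k] w = shiftLP^[(k + (n - k')) % n] (shiftLP^[k'] w) := by
      have h5 : ((k + (n - k')) % n + k') % n = k % n := by
        rw [Nat.mod_add_mod]
        have h6 : k + (n - k') + k' = k + n := by omega
        rw [h6, Nat.add_mod_right]
      rw [← Function.iterate_add_apply]
      conv_lhs => rw [iter_mod hw]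
      conv_rhs => rw [iter_mod hw, h5]
    rw [hback]
    exact hcan.2 _ (Nat.mod_lt _ hn)
  refine ⟨⟨v, ⟨hmem, hvcan⟩, ?_⟩, hallle⟩
  rintro v' ⟨⟨k', hk', hveq⟩, hcan⟩
  have h1 : lexLe v v' := by rw [hveq]; exact hmin k' hk'
  have h2 : lexLe v' v := by
    have h3 := hallle v' ⟨⟨k', hk', hveq⟩, hcan⟩ k₀ hk₀
    rw [← hv] at h3
    exact h3
  exact lexLe_antisymm h2 h1
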